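/- Let g : ℝ^d → ℝ^d satisfy the dissipativity condition ⟨x, g(x)⟩ ≥ m‖x‖^{1+γ} − b for all x, and the bound ‖g(x)‖² ≤ 2M²‖x‖^{2γ} + 2B². Then for every step-size η with 0 < η ≤ m/M² and every x ∈ ℝ^d: ‖x − η g(x)‖² ≤ ‖x‖² + 2η(b + m) + 2η²B². -/

import Mathlib

theorem stmt5 (d : ℕ) (g : EuclideanSpace ℝ (Fin d) → EuclideanSpace ℝ (Fin d))
    (m b M B γ : ℝ) (hm : 0 < m) (hb : 0 ≤ b) (hM : 0 < M) (hB : 0 ≤ B)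
    (hγ0 : 0 < γ) (hγ1 : γ < 1)
    (hdiss : ∀ x, m * ‖x‖ ^ (1 + γ) - b ≤ (inner ℝ x (g x) : ℝ))
    (hgrow : ∀ x, ‖g x‖ ^ 2 ≤ 2 * M ^ 2 * ‖x‖ ^ (2 * γ) + 2 * B ^ 2)
    (η : ℝ) (hη0 : 0 < η) (hη : η ≤ m / M ^ 2) :
    ∀ x, ‖x - η • g x‖ ^ 2 ≤ ‖x‖ ^ 2 + 2 * η * (b + m) + 2 * η ^ 2 * B ^ 2 := by
  intro x
  have hx : (0:ℝ) ≤ ‖x‖ := norm_nonneg x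
  have hηM : η * M ^ 2 ≤ m := by
    rw [div_eq_mul_inv] at hη
    calc η * M ^ 2 ≤ m * (M ^ 2)⁻¹ * M ^ 2 := by
          apply mul_le_mul_of_nonneg_right hη (by positivity)
      _ = m := by field_simp
  have hpow1 : (0:ℝ) ≤ ‖x‖ ^ (1 + γ) := Real.rpow_nonneg hx _
  have key : ‖x‖ ^ (2 * γ) ≤ ‖x‖ ^ (1 + γ) + 1 := by
    rcases le_total ‖x‖ 1 with h | h
    · have : ‖x‖ ^ (2 * γ) ≤ 1 := Real.rpow_le_one hx h (by positivity)
      linarith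
    · have : ‖x‖ ^ (2 * γ) ≤ ‖x‖ ^ (1 + γ) :=
        Real.rpow_le_rpow_of_exponent_le h (by linarith)
      linarith
  have hexp : ‖x - η • g x‖ ^ 2 =
      ‖x‖ ^ 2 - 2 * η * (inner ℝ x (g x) : ℝ) + η ^ 2 * ‖g x‖ ^ 2 := by
    rw [norm_sub_sq_real, inner_smul_right, norm_smul]
    rw [Real.norm_eq_abs, abs_of_pos hη0]
    ring
  have h1 := hdiss x
  have h2 := hgrow x
  rw [hexp]
  have hg2 : η ^ 2 * ‖g x‖ ^ 2 ≤ η ^ 2 * (2 * M ^ 2 * ‖x‖ ^ (2 * γ) + 2 * B ^ 2) :=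
    mul_le_mul_of_nonneg_left h2 (by positivity)
  nlinarith [mul_le_mul_of_nonneg_left key (by positivity : (0:ℝ) ≤ 2 * η ^ 2 * M ^ 2), mul_le_mul_of_nonneg_right hηM hpow1, mul_le_mul_of_nonneg_left h1 (by positivity : (0:ℝ) ≤ 2*η)]
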